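/- arXiv:1403.5435 — 4 statements merged into one kernel-verified Lean document; each statement's English description precedes it below -/
import Mathlib

section
/- Let h : ℝ → ℝ be continuous with |h(x)| < β|x| for all x ≠ 0, where β > 0. Then there exists a continuous strictly increasing function h̃ : (0,∞) → ℝ such that |h(x)| < h̃(x) < β·x for all x > 0. -/
theorem stmt_2 (h : ℝ → ℝ) (hcont : Continuous h) (β : ℝ) (hβ : 0 < β)
    (hbound : ∀ x : ℝ, x ≠ 0 → |h x| < β * |x|) :
    ∃ ht : ℝ → ℝ, ContinuousOn ht (Set.Ioi 0) ∧ StrictMonoOn ht (Set.Ioi 0) ∧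
      ∀ x : ℝ, 0 < x → |h x| < ht x ∧ ht x < β * x := by
  have habs : Continuous fun t => |h t| := hcont.abs
  -- |h 0| = 0
  have hle : ∀ t : ℝ, |h t| ≤ β * |t| := by
    have hc : IsClosed {t : ℝ | |h t| ≤ β * |t|} :=
      isClosed_le habs (continuous_const.mul continuous_abs)
    have hsub : ({0}ᶜ : Set ℝ) ⊆ {t : ℝ | |h t| ≤ β * |t|} := fun t ht =>
      (hbound t ht).le
    have := closure_minimal hsub hc
    rw [(dense_compl_singleton (0:ℝ)).closure_eq] at this
    exact fun t => this (Set.mem_univ t)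
  have h0 : |h 0| = 0 := le_antisymm (by simpa using hle 0) (abs_nonneg _)
  set M : ℝ → ℝ := fun x => sSup ((fun t => |h t|) '' Set.Icc 0 x) with hM
  have hne : ∀ x : ℝ, 0 ≤ x → ((fun t => |h t|) '' Set.Icc 0 x).Nonempty :=
    fun x hx => (Set.nonempty_Icc.2 hx).image _
  have hbdd : ∀ x : ℝ, BddAbove ((fun t => |h t|) '' Set.Icc 0 x) :=
    fun x => (isCompact_Icc.image habs).bddAbove
  have hMge : ∀ x : ℝ, 0 ≤ x → |h x| ≤ M x := fun x hx =>
    le_csSup (hbdd x) ⟨x, Set.mem_Icc.2 ⟨hx, le_rfl⟩, rfl⟩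
  have hMmono : ∀ x y : ℝ, 0 ≤ x → x ≤ y → M x ≤ M y := fun x y hx hxy =>
    csSup_le_csSup (hbdd y) (hne x hx)
      (Set.image_mono  (Set.Icc_subset_Icc le_rfl hxy))
  have hMlt : ∀ x : ℝ, 0 < x → M x < β * x := by
    intro x hx
    obtain ⟨t₀, ht₀, hmax⟩ := isCompact_Icc.exists_isMaxOn (Set.nonempty_Icc.2 hx.le)
      habs.continuousOn
    have hMle : M x ≤ |h t₀| := csSup_le (hne x hx.le) (by rintro _ ⟨t, ht, rfl⟩; exact hmax ht)
    rcases eq_or_ne t₀ 0 with rfl | hne0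
    · calc M x ≤ |h 0| := hMle
        _ < β * x := by rw [h0]; positivity
    · calc M x ≤ |h t₀| := hMle
        _ < β * |t₀| := hbound t₀ hne0
        _ ≤ β * x := by
            rw [abs_of_nonneg ht₀.1]
            exact mul_le_mul_of_nonneg_left ht₀.2 hβ.le
  -- continuity of M on Ioi 0
  have hMcont : ContinuousOn M (Set.Ioi 0) := by
    intro x₀ hx₀
    rw [Metric.continuousWithinAt_iff]
    intro ε hε
    have hK : IsCompact (Set.Icc (0:ℝ) (x₀ + 1)) := isCompact_Icc
    have huc : UniformContinuousOn (fun t => |h t|) (Set.Icc 0 (x₀ + 1)) :=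
      hK.uniformContinuousOn_of_continuous habs.continuousOn
    rw [Metric.uniformContinuousOn_iff] at huc
    obtain ⟨δ, hδ, hδ'⟩ := huc (ε/2) (by positivity)
    have key : ∀ a b : ℝ, 0 < a → a ≤ b → b ≤ x₀ + 1 → b - a < δ → M b ≤ M a + ε/2 := by
      intro a b ha hab hb hd
      apply csSup_le (hne b (ha.le.trans hab))
      rintro _ ⟨t, ht, rfl⟩
      rcases le_or_gt t a with hta | hta
      · have : |h t| ≤ M a := le_csSup (hbdd a) ⟨t, Set.mem_Icc.2 ⟨ht.1, hta⟩, rfl⟩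
        linarith
      · have hta' : a ∈ Set.Icc (0:ℝ) (x₀ + 1) := ⟨ha.le, by linarith⟩
        have htK : t ∈ Set.Icc (0:ℝ) (x₀ + 1) := ⟨ht.1, ht.2.trans hb⟩
        have hdist : dist t a < δ := by
          rw [Real.dist_eq, abs_of_pos (by linarith)]
          linarith [ht.2]
        have := hδ' t htK a hta' hdist
        rw [Real.dist_eq] at this
        have h2 : |h a| ≤ M a := hMge a ha.le
        linarith [(abs_lt.1 this).2]
    refine ⟨min δ 1, lt_min hδ one_pos, ?_⟩
    intro x hx hdx
    have hx' : (0:ℝ) < x := hx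
    have hdx' : |x - x₀| < min δ 1 := by rwa [Real.dist_eq] at hdx
    have hd1 : |x - x₀| < δ := hdx'.trans_le (min_le_left _ _)
    have hd2 : |x - x₀| < 1 := hdx'.trans_le (min_le_right _ _)
    rw [Real.dist_eq]
    rcases le_or_gt x x₀ with hxx | hxx
    · have h1 : M x₀ ≤ M x + ε/2 := key x x₀ hx' hxx (by linarith) (by
        have := abs_lt.1 hd1; linarith [this.1])
      have h2 : M x ≤ M x₀ := hMmono x x₀ hx'.le hxx
      rw [abs_lt]; constructor <;> linarith
    · have h1 : M x ≤ M x₀ + ε/2 := key x₀ x hx₀ hxx.le (by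
        have := abs_lt.1 hd2; linarith [this.2]) (by
        have := abs_lt.1 hd1; linarith [this.2])
      have h2 : M x₀ ≤ M x := hMmono x₀ x (le_of_lt hx₀) hxx.le
      rw [abs_lt]; constructor <;> linarith
  refine ⟨fun x => (M x + β * x) / 2, ?_, ?_, ?_⟩
  · exact (hMcont.add ((continuous_const.mul continuous_id).continuousOn)).div_const 2
  · intro x hx y hy hxy
    have h1 : M x ≤ M y := hMmono x y (le_of_lt hx) hxy.le
    have h2 : β * x < β * y := by
      exact mul_lt_mul_of_pos_left hxy hβ
    simp only
    linarith
  · intro x hx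
    have h1 : |h x| ≤ M x := hMge x hx.le
    have h2 : |h x| < β * x := by
      have := hbound x hx.ne'
      rwa [abs_of_pos hx] at this
    have h3 : M x < β * x := hMlt x hx
    constructor <;> (simp only; linarith)
end

section
/- For b > 0, the inequality 2 − b² ≤ 2(b² − 1)·√(b² + 1) holds if and only if b ≥ √5/2. -/
theorem stmt_13 (b : ℝ) (hb : 0 < b) :
    2 - b ^ 2 ≤ 2 * (b ^ 2 - 1) * Real.sqrt (b ^ 2 + 1) ↔ Real.sqrt 5 / 2 ≤ b := by
  have hs0 : (0:ℝ) ≤ Real.sqrt (b ^ 2 + 1) := Real.sqrt_nonneg _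
  have hs2 : Real.sqrt (b ^ 2 + 1) ^ 2 = b ^ 2 + 1 := Real.sq_sqrt (by positivity)
  have h5 : Real.sqrt 5 ^ 2 = 5 := Real.sq_sqrt (by norm_num)
  have h5n : (0:ℝ) ≤ Real.sqrt 5 := Real.sqrt_nonneg _
  constructor
  · intro h
    by_contra hlt
    push_neg at hlt
    have hb2 : b ^ 2 < 5 / 4 := by nlinarith
    nlinarith [sq_nonneg (2 - b^2 - 2*(b^2-1)*Real.sqrt (b^2+1)),
      sq_nonneg (2 - b^2 + 2*(b^2-1)*Real.sqrt (b^2+1)),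
      mul_nonneg hs0 hb.le, sq_nonneg b, sq_nonneg (b*Real.sqrt (b^2+1))]
  · intro h
    have hb2 : 5 / 4 ≤ b ^ 2 := by nlinarith
    have hs32 : (3:ℝ)/2 ≤ Real.sqrt (b ^ 2 + 1) := by nlinarith
    nlinarith
end

section
/- For b > 0, set ξ₀ = −1 + √(1+b²). Then the inequality 2(b²+1)ξ₀/(b² + ξ₀²)² ≤ 1 holds if and only if b ≥ √5/2. -/
theorem stmt_14 (b : ℝ) (hb : 0 < b) (ξ₀ : ℝ) (hξ₀ : ξ₀ = Real.sqrt (1 + b ^ 2) - 1) :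
    2 * (b ^ 2 + 1) * ξ₀ / (b ^ 2 + ξ₀ ^ 2) ^ 2 ≤ 1 ↔ Real.sqrt 5 / 2 ≤ b := by
  have hb2 : (0:ℝ) < 1 + b ^ 2 := by positivity
  have hs : Real.sqrt (1 + b ^ 2) ^ 2 = 1 + b ^ 2 := Real.sq_sqrt hb2.le
  set s := Real.sqrt (1 + b ^ 2) with hsdef
  have hs1 : 1 < s := by nlinarith [Real.sqrt_nonneg (1 + b ^ 2)]
  have hpos : 0 < b ^ 2 + ξ₀ ^ 2 := by positivity
  have hden : 0 < (b ^ 2 + ξ₀ ^ 2) ^ 2 := by positivity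
  have hsum : b ^ 2 + (s - 1) ^ 2 = 2 * s * (s - 1) := by nlinarith [hs]
  rw [div_le_one hden, hξ₀, hsum]
  have hsq5 : Real.sqrt 5 ^ 2 = 5 := Real.sq_sqrt (by norm_num)
  have hsq5n : 0 ≤ Real.sqrt 5 := Real.sqrt_nonneg 5
  constructor
  · intro h
    -- from h: 2 s² (s-1) ≤ 4 s² (s-1)² ⇒ s ≥ 3/2 ⇒ b² ≥ 5/4
    have hsp : (0:ℝ) < s := by linarith
    have hs32 : 3 / 2 ≤ s := by
      by_contra hc
      push_neg at hc
      nlinarith [mul_pos (mul_pos hsp hsp) (sub_pos.mpr hs1), hs, mul_pos hsp (sub_pos.mpr hs1)]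
    have hb5 : 5 / 4 ≤ b ^ 2 := by nlinarith [hs]
    have : Real.sqrt 5 ≤ 2 * b := by
      have h2 := Real.sqrt_le_sqrt (show (5:ℝ) ≤ (2 * b) ^ 2 by nlinarith)
      rwa [Real.sqrt_sq (by positivity)] at h2
    linarith
  · intro h
    have hb5 : 5 / 4 ≤ b ^ 2 := by nlinarith [hsq5, hsq5n]
    have hs32 : 3 / 2 ≤ s := by nlinarith [hs]
    nlinarith [hs, mul_pos hb (by linarith : (0:ℝ) < s - 1)]
end

section
/- Consider the scalar delay differential equation ẋ(t) = b·x(t−τ)·(1 − x(t)) − c·x(t) with b, c > 0 and τ ≥ 0, and a continuous initial function φ : [−τ,0] → [0,1]. Then the solution satisfies 0 ≤ x(t) ≤ 1 for all t ≥ 0 (the set C([−τ,0],[0,1]) is invariant). -/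
theorem stmt_19 (b c τ : ℝ) (hb : 0 < b) (hc : 0 < c) (hτ : 0 ≤ τ)
    (x : ℝ → ℝ) (hcont : Continuous x)
    (hode : ∀ t : ℝ, 0 ≤ t →
      HasDerivAt x (b * x (t - τ) * (1 - x t) - c * x t) t)
    (hinit : ∀ s : ℝ, -τ ≤ s → s ≤ 0 → x s ∈ Set.Icc (0 : ℝ) 1) :
    ∀ t : ℝ, 0 ≤ t → x t ∈ Set.Icc (0 : ℝ) 1 := by
  -- Step 1: the upper bound `x t ≤ 1` for all `t ≥ 0`.
  have hupper : ∀ t : ℝ, 0 ≤ t → x t ≤ 1 := by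
    by_contra h
    push_neg at h
    obtain ⟨t₀, ht₀, hxt₀⟩ := h
    set A : Set ℝ := {t : ℝ | 0 ≤ t ∧ 1 < x t} with hAdef
    have hne : A.Nonempty := ⟨t₀, ht₀, hxt₀⟩
    have hbdd : BddBelow A := ⟨0, fun a ha => ha.1⟩
    set T := sInf A with hTdef
    have hT0 : 0 ≤ T := le_csInf hne fun a ha => ha.1
    have hTle : ∀ a ∈ A, T ≤ a := fun a ha => csInf_le hbdd ha
    -- x s ≤ 1 for 0 ≤ s < T
    have hlt : ∀ s : ℝ, 0 ≤ s → s < T → x s ≤ 1 := by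
      intro s hs hsT
      by_contra h'
      exact absurd (hTle s ⟨hs, lt_of_not_ge h'⟩) (not_le.2 hsT)
    -- ¬ (1 < x T)
    have hxTle : x T ≤ 1 := by
      by_contra h'
      push_neg at h'
      rcases eq_or_lt_of_le hT0 with hT0' | hT0'
      · exact absurd ((hinit 0 (by linarith) le_rfl).2) (by rw [hT0']; exact not_le.2 h')
      · -- T > 0 : continuity gives a point below T in A
        have hev : ∀ᶠ t in nhds T, 1 < x t :=
          (hcont.continuousAt (x := T)).eventually (lt_mem_nhds h')
        rcases Metric.eventually_nhds_iff.1 hev with ⟨ε, hε, hball⟩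
        set s : ℝ := max 0 (T - ε / 2) with hsdef
        have hs0 : 0 ≤ s := le_max_left _ _
        have hsT : s < T := by
          apply max_lt hT0'
          linarith
        have hdist : |s - T| < ε := by
          rw [abs_sub_lt_iff]
          constructor
          · linarith
          · have : T - ε / 2 ≤ s := le_max_right _ _
            linarith
        have : s ∈ A := ⟨hs0, hball hdist⟩
        exact absurd (hTle s this) (not_le.2 hsT)
    -- ¬ (x T < 1)
    have hxTge : 1 ≤ x T := by
      by_contra h'
      push_neg at h'
      have hev : ∀ᶠ t in nhds T, x t < 1 :=
        (hcont.continuousAt (x := T)).eventually (gt_mem_nhds h')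
      rcases Metric.eventually_nhds_iff.1 hev with ⟨ε, hε, hball⟩
      rcases Real.lt_sInf_add_pos hne hε with ⟨a, haA, haε⟩
      have haT : T ≤ a := hTle a haA
      have : |a - T| < ε := by
        rw [abs_sub_lt_iff]
        constructor <;> [linarith; linarith]
      exact absurd (hball this) (not_lt.2 haA.2.le)
    have hxT : x T = 1 := le_antisymm hxTle hxTge
    -- derivative at T is -c < 0
    have hd : HasDerivAt x (-c) T := by
      have := hode T hT0
      rw [hxT] at this
      simpa using this
    have hslope : ∀ᶠ t in nhdsWithin T (Set.Ioi T), slope x T t < 0 := by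
      have h1 : Filter.Tendsto (slope x T) (nhdsWithin T {T}ᶜ) (nhds (-c)) :=
        hasDerivAt_iff_tendsto_slope.1 hd
      have h2 : ∀ᶠ y in nhdsWithin T {T}ᶜ, slope x T y < 0 :=
        h1.eventually (gt_mem_nhds (by linarith : (-c : ℝ) < 0))
      exact h2.filter_mono (nhdsWithin_mono T fun y hy => ne_of_gt hy)
    rcases mem_nhdsGT_iff_exists_Ioo_subset.1 hslope with ⟨u, hu, hsub⟩
    have hu' : T < u := hu
    rcases Real.lt_sInf_add_pos hne (show (0:ℝ) < min (u - T) 1 by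
      exact lt_min (by linarith) one_pos) with ⟨a, haA, haε⟩
    have haT : T ≤ a := hTle a haA
    rcases eq_or_lt_of_le haT with h | h
    · exact absurd haA.2 (by rw [← h, hxT]; exact lt_irrefl 1)
    · have haIoo : a ∈ Set.Ioo T u := by
        constructor
        · exact h
        · have : min (u - T) 1 ≤ u - T := min_le_left _ _
          linarith
      have hsl : slope x T a < 0 := hsub haIoo
      rw [slope_def_field] at hsl
      have hden : 0 < a - T := by linarith
      have : x a - x T < 0 := by
        by_contra hcon
        push_neg at hcon
        exact absurd hsl (not_lt.2 (div_nonneg hcon hden.le))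
      rw [hxT] at this
      exact absurd haA.2 (by linarith)
  -- Step 2: the lower bound `0 ≤ x t` for all `t ≥ 0`.
  have hlower : ∀ t : ℝ, 0 ≤ t → 0 ≤ x t := by
    by_contra h
    push_neg at h
    obtain ⟨t₀, ht₀, hxt₀⟩ := h
    set A : Set ℝ := {t : ℝ | 0 ≤ t ∧ x t < 0} with hAdef
    have hne : A.Nonempty := ⟨t₀, ht₀, hxt₀⟩
    have hbdd : BddBelow A := ⟨0, fun a ha => ha.1⟩
    set T := sInf A with hTdef
    have hT0 : 0 ≤ T := le_csInf hne fun a ha => ha.1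
    have hTle : ∀ a ∈ A, T ≤ a := fun a ha => csInf_le hbdd ha
    have hge : ∀ s : ℝ, 0 ≤ s → s < T → 0 ≤ x s := by
      intro s hs hsT
      by_contra h'
      exact absurd (hTle s ⟨hs, lt_of_not_ge h'⟩) (not_le.2 hsT)
    -- ¬ (x T < 0)
    have hxTge : 0 ≤ x T := by
      by_contra h'
      push_neg at h'
      rcases eq_or_lt_of_le hT0 with hT0' | hT0'
      · have h0 := (hinit 0 (by linarith) le_rfl).1
        rw [hT0'] at h0
        linarith [hT0']
      · have hev : ∀ᶠ t in nhds T, x t < 0 :=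
          (hcont.continuousAt (x := T)).eventually (gt_mem_nhds h')
        rcases Metric.eventually_nhds_iff.1 hev with ⟨ε, hε, hball⟩
        set s : ℝ := max 0 (T - ε / 2) with hsdef
        have hs0 : 0 ≤ s := le_max_left _ _
        have hsT : s < T := by
          apply max_lt hT0'
          linarith
        have hdist : |s - T| < ε := by
          rw [abs_sub_lt_iff]
          constructor
          · linarith
          · have : T - ε / 2 ≤ s := le_max_right _ _
            linarith
        have : s ∈ A := ⟨hs0, hball hdist⟩
        exact absurd (hTle s this) (not_le.2 hsT)
    -- ¬ (0 < x T)
    have hxTle : x T ≤ 0 := by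
      by_contra h'
      push_neg at h'
      have hev : ∀ᶠ t in nhds T, 0 < x t :=
        (hcont.continuousAt (x := T)).eventually (lt_mem_nhds h')
      rcases Metric.eventually_nhds_iff.1 hev with ⟨ε, hε, hball⟩
      rcases Real.lt_sInf_add_pos hne hε with ⟨a, haA, haε⟩
      have haT : T ≤ a := hTle a haA
      have : |a - T| < ε := by
        rw [abs_sub_lt_iff]
        constructor <;> [linarith; linarith]
      exact absurd (hball this) (not_lt.2 haA.2.le)
    have hxT : x T = 0 := le_antisymm hxTle hxTge
    -- x ≥ 0 on [-τ, T]
    have hnn : ∀ s : ℝ, -τ ≤ s → s ≤ T → 0 ≤ x s := by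
      intro s hs hsT
      rcases le_or_gt s 0 with h0 | h0
      · exact (hinit s hs h0).1
      · rcases eq_or_lt_of_le hsT with h1 | h1
        · rw [h1, hxT]
        · exact hge s h0.le h1
    rcases eq_or_lt_of_le hτ with hτ0 | hτ0
    · -- τ = 0 : Gronwall-type uniqueness argument on [T, T+1]
      have hτ0 : τ = 0 := hτ0.symm
      have key : ∀ t ∈ Set.Icc T (T + 1), x t = 0 := by
        -- bound the coefficient on the compact interval
        obtain ⟨C, hC⟩ := (isCompact_Icc (a := T) (b := T + 1)).exists_bound_of_continuousOn
          (f := fun t => b * (1 - x t) - c)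
          (by fun_prop)
        have main : ∀ t ∈ Set.Icc T (T + 1), ‖x t‖ ≤ gronwallBound 0 C 0 (t - T) := by
          apply norm_le_gronwallBound_of_norm_deriv_right_le
            (f' := fun t => b * x (t - τ) * (1 - x t) - c * x t)
          · exact hcont.continuousOn
          · intro s hs
            exact (hode s (le_trans hT0 hs.1)).hasDerivWithinAt
          · rw [hxT]; simp
          · intro s hs
            have hs0 : 0 ≤ s := le_trans hT0 hs.1
            have : b * x (s - τ) * (1 - x s) - c * x s = (b * (1 - x s) - c) * x s := by
              rw [hτ0]; ring_nf
            rw [this, norm_mul, add_zero]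
            exact mul_le_mul_of_nonneg_right (hC s ⟨hs.1, hs.2.le⟩) (norm_nonneg _)
        intro t ht
        have := main t ht
        rw [gronwallBound_ε0_δ0] at this
        have := le_antisymm this (norm_nonneg _)
        simpa using this
      rcases Real.lt_sInf_add_pos hne one_pos with ⟨a, haA, haε⟩
      have haT : T ≤ a := hTle a haA
      have : x a = 0 := key a ⟨haT, by linarith⟩
      exact absurd haA.2 (by rw [this]; exact lt_irrefl 0)
    · -- τ > 0 : use monotonicity of exp(c t) * x t on [T, T + τ]
      set F : ℝ → ℝ := fun t => Real.exp (c * t) * x t with hFdef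
      have hFd : ∀ t : ℝ, 0 ≤ t →
          HasDerivAt F (Real.exp (c * t) * (b * x (t - τ) * (1 - x t))) t := by
        intro t ht
        have h1 : HasDerivAt (fun t => Real.exp (c * t)) (c * Real.exp (c * t)) t := by
          have := ((hasDerivAt_id t).const_mul c).exp
          convert this using 1 <;> simp [mul_comm]
        have h2 := (h1.mul (hode t ht))
        exact h2.congr_deriv (by ring)
      have hmono : MonotoneOn F (Set.Icc T (T + τ)) := by
        apply monotoneOn_of_deriv_nonneg (convex_Icc T (T + τ))
        · exact (Continuous.mul (by fun_prop) hcont).continuousOn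
        · intro t ht
          rw [interior_Icc] at ht
          exact (hFd t (le_trans hT0 ht.1.le)).differentiableAt.differentiableWithinAt
        · intro t ht
          rw [interior_Icc] at ht
          have ht0 : 0 ≤ t := le_trans hT0 ht.1.le
          rw [(hFd t ht0).deriv]
          have h1 : 0 ≤ x (t - τ) := by
            apply hnn
            · linarith [ht.1]
            · linarith [ht.2]
          have h2 : x t ≤ 1 := hupper t ht0
          have h3 : (0:ℝ) ≤ Real.exp (c * t) := (Real.exp_pos _).le
          have := mul_nonneg (mul_nonneg hb.le h1) (by linarith : (0:ℝ) ≤ 1 - x t)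
          positivity
      have hFT : F T = 0 := by
        simp [hFdef, hxT]
      rcases Real.lt_sInf_add_pos hne hτ0 with ⟨a, haA, haε⟩
      have haT : T ≤ a := hTle a haA
      have haIcc : a ∈ Set.Icc T (T + τ) := ⟨haT, by linarith⟩
      have : F T ≤ F a := hmono (Set.left_mem_Icc.2 (by linarith)) haIcc haT
      rw [hFT] at this
      have hxapos : 0 ≤ x a := by
        have hexp : (0:ℝ) < Real.exp (c * a) := Real.exp_pos _
        by_contra hcon
        push_neg at hcon
        have : F a < 0 := mul_neg_of_pos_of_neg hexp hcon
        linarith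
      exact absurd haA.2 (not_lt.2 hxapos)
  intro t ht
  exact ⟨hlower t ht, hupper t ht⟩
end
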